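/- Let r > 0, K2 > 0, K1 ∈ ℝ, H > 0, s0 ∈ ℝ, let I⁺ and I⁻ be disjoint finite index sets, and for each i ∈ I⁺ ∪ I⁻ let α_i, R_i0 ∈ ℝ. For u ∈ [−1,1] let ξ_u(τ) = s0 + uτ, and assume that for every u ∈ [−1,1] and every τ ∈ [0,H] one has 0 ≤ α_i − ξ_u(τ) ≤ r for all i ∈ I⁺ and −r ≤ α_i − ξ_u(τ) ≤ 0 for all i ∈ I⁻. For each u ∈ [−1,1] and i ∈ I⁺ ∪ I⁻, let R_i^u : [0,H] → ℝ be differentiable with R_i^u(0) = R_i0 and (R_i^u)'(τ) = K1 − K2·(1 − |α_i − ξ_u(τ)|/r) for all τ ∈ [0,H], and define J(u) = Σ_{i∈I⁺∪I⁻} ∫_0^H R_i^u(τ) dτ. Then J(u) = J(0) + u·(K2·H³/(6r))·(|I⁻| − |I⁺|) for all u ∈ [−1,1]. Consequently, if |I⁺| > |I⁻| then u = 1 is the unique minimizer of J over [−1,1], and if |I⁺| < |I⁻| then u = −1 is the unique minimizer of J over [−1,1]. -/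

import Mathlib

lemma integral_of_linear_deriv (a b x0 H : ℝ) (hH : 0 < H) (f : ℝ → ℝ)
    (hf0 : f 0 = x0)
    (hf : ∀ τ ∈ Set.Icc (0:ℝ) H, HasDerivWithinAt f (a + b * τ) (Set.Icc (0:ℝ) H) τ) :
    ∫ τ in (0:ℝ)..H, f τ = x0 * H + a * H^2 / 2 + b * H^3 / 6 := by
  set g : ℝ → ℝ := fun τ => x0 + a * τ + b * τ^2 / 2 with hg
  have hgderiv : ∀ x : ℝ, HasDerivAt g (a + b * x) x := by
    intro x
    have : HasDerivAt g (0 + a * 1 + b * (2 * x ^ 1) / 2) x := by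
      exact (((hasDerivAt_const x x0).add ((hasDerivAt_id x).const_mul a)).add
        (((hasDerivAt_pow 2 x).const_mul b).div_const 2))
    convert this using 1; ring
  have heq : ∀ τ ∈ Set.Icc (0:ℝ) H, f τ = g τ := by
    apply eq_of_has_deriv_right_eq (f' := fun τ => a + b * τ)
    · intro x hx
      exact (hf x (Set.mem_Icc_of_Ico hx)).mono_of_mem_nhdsWithin
        (Icc_mem_nhdsGE_of_mem hx)
    · intro x hx
      exact (hgderiv x).hasDerivWithinAt
    · exact fun x hx => (hf x hx).continuousWithinAt
    · exact Continuous.continuousOn (by fun_prop)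
    · simp [hf0, hg]
  have : ∫ τ in (0:ℝ)..H, f τ = ∫ τ in (0:ℝ)..H, g τ := by
    apply intervalIntegral.integral_congr
    intro x hx
    exact heq x (by rwa [Set.uIcc_of_le hH.le] at hx)
  rw [this]
  have hcalc : ∫ τ in (0:ℝ)..H, g τ =
      (x0 * H + a * H^2 / 2 + b * H^3 / 6) - (x0 * 0 + a * 0^2 / 2 + b * 0^3 / 6) := by
    apply intervalIntegral.integral_eq_sub_of_hasDerivAt
    · intro x _
      have : HasDerivAt (fun t => x0 * t + a * t^2 / 2 + b * t^3 / 6) (a + b * x) x → True := fun _ => trivial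
      have h1 : HasDerivAt (fun t => x0 * t + a * t^2 / 2 + b * t^3 / 6)
          (x0 * 1 + a * (2 * x ^ 1) / 2 + b * (3 * x ^ 2) / 6) x := by
        exact (((hasDerivAt_id x).const_mul x0).add
          (((hasDerivAt_pow 2 x).const_mul a).div_const 2)).add
          (((hasDerivAt_pow 3 x).const_mul b).div_const 6)
      exact h1.congr_deriv (by simp only [hg]; ring)
    · exact Continuous.intervalIntegrable (by fun_prop) 0 H
  rw [hcalc]; ring



open Finset in
/-- Receding horizon lemma: an agent at `s0` moves with constant control `u ∈ [−1,1]`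
over the horizon `[0,H]`; `I⁺` (resp. `I⁻`) indexes sampling points staying within
sensing range `r` to the right (resp. left) of the agent for all admissible `u`;
each uncertainty evolves as `Ṙᵢᵘ(τ) = K1 − K2(1 − |αᵢ − ξᵤ(τ)|/r)` with
`Rᵢᵘ(0) = Rᵢ0`. Then the total cost satisfies
`J(u) = J(0) + u·(K2H³/(6r))·(|I⁻| − |I⁺|)`, so `u = 1` is the unique minimizer
when `|I⁺| > |I⁻|` and `u = −1` is the unique minimizer when `|I⁺| < |I⁻|`. -/
theorem stmt_8 (r K1 K2 H s0 : ℝ) (hr : r > 0) (hK2 : K2 > 0) (hH : H > 0)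
    {ι : Type*} [DecidableEq ι] (Iplus Iminus : Finset ι) (hdisj : Disjoint Iplus Iminus)
    (α R0 : ι → ℝ)
    (hrange : ∀ u ∈ Set.Icc (-1 : ℝ) 1, ∀ τ ∈ Set.Icc (0 : ℝ) H,
      (∀ i ∈ Iplus, 0 ≤ α i - (s0 + u * τ) ∧ α i - (s0 + u * τ) ≤ r) ∧
      (∀ i ∈ Iminus, -r ≤ α i - (s0 + u * τ) ∧ α i - (s0 + u * τ) ≤ 0))
    (R : ℝ → ι → ℝ → ℝ)
    (hR0 : ∀ u ∈ Set.Icc (-1 : ℝ) 1, ∀ i ∈ Iplus ∪ Iminus, R u i 0 = R0 i)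
    (hRderiv : ∀ u ∈ Set.Icc (-1 : ℝ) 1, ∀ i ∈ Iplus ∪ Iminus, ∀ τ ∈ Set.Icc (0 : ℝ) H,
      HasDerivWithinAt (R u i)
        (K1 - K2 * (1 - |α i - (s0 + u * τ)| / r)) (Set.Icc (0 : ℝ) H) τ)
    (J : ℝ → ℝ)
    (hJ : ∀ u : ℝ, J u = ∑ i ∈ Iplus ∪ Iminus, ∫ τ in (0 : ℝ)..H, R u i τ) :
    (∀ u ∈ Set.Icc (-1 : ℝ) 1,
      J u = J 0 + u * (K2 * H ^ 3 / (6 * r)) * ((Iminus.card : ℝ) - (Iplus.card : ℝ))) ∧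
    (Iminus.card < Iplus.card →
      ∀ u ∈ Set.Icc (-1 : ℝ) 1, u ≠ 1 → J 1 < J u) ∧
    (Iplus.card < Iminus.card →
      ∀ u ∈ Set.Icc (-1 : ℝ) 1, u ≠ -1 → J (-1) < J u) := by
  have hr' : r ≠ 0 := ne_of_gt hr
  set c : ℝ := K2 * H ^ 3 / (6 * r) with hc
  have hcpos : 0 < c := by positivity
  have hplus : ∀ u ∈ Set.Icc (-1:ℝ) 1, ∀ i ∈ Iplus,
      ∫ τ in (0:ℝ)..H, R u i τ =
        R0 i * H + (K1 - K2 + K2 * (α i - s0) / r) * H ^ 2 / 2 - u * c := by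
    intro u hu i hi
    have hi' : i ∈ Iplus ∪ Iminus := Finset.mem_union_left _ hi
    have hcomp := integral_of_linear_deriv (K1 - K2 + K2 * (α i - s0) / r) (-(K2 * u / r))
      (R0 i) H hH (R u i) (hR0 u hu i hi') ?_
    · rw [hcomp, hc]; ring
    · intro τ hτ
      have habs : |α i - (s0 + u * τ)| = α i - (s0 + u * τ) :=
        abs_of_nonneg ((hrange u hu τ hτ).1 i hi).1
      have hd := hRderiv u hu i hi' τ hτ
      rw [habs] at hd
      convert hd using 1
      field_simp
      ring
  have hminus : ∀ u ∈ Set.Icc (-1:ℝ) 1, ∀ i ∈ Iminus,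
      ∫ τ in (0:ℝ)..H, R u i τ =
        R0 i * H + (K1 - K2 + K2 * (s0 - α i) / r) * H ^ 2 / 2 + u * c := by
    intro u hu i hi
    have hi' : i ∈ Iplus ∪ Iminus := Finset.mem_union_right _ hi
    have hcomp := integral_of_linear_deriv (K1 - K2 + K2 * (s0 - α i) / r) (K2 * u / r)
      (R0 i) H hH (R u i) (hR0 u hu i hi') ?_
    · rw [hcomp, hc]; ring
    · intro τ hτ
      have habs : |α i - (s0 + u * τ)| = -(α i - (s0 + u * τ)) :=
        abs_of_nonpos ((hrange u hu τ hτ).2 i hi).2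
      have hd := hRderiv u hu i hi' τ hτ
      rw [habs] at hd
      convert hd using 1
      field_simp
      ring
  have key : ∀ u ∈ Set.Icc (-1:ℝ) 1, J u =
      ((∑ i ∈ Iplus, (R0 i * H + (K1 - K2 + K2 * (α i - s0) / r) * H ^ 2 / 2))
       + ∑ i ∈ Iminus, (R0 i * H + (K1 - K2 + K2 * (s0 - α i) / r) * H ^ 2 / 2))
      + u * c * ((Iminus.card : ℝ) - (Iplus.card : ℝ)) := by
    intro u hu
    rw [hJ u, Finset.sum_union hdisj,
      Finset.sum_congr rfl (hplus u hu), Finset.sum_congr rfl (hminus u hu),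
      Finset.sum_sub_distrib]
    simp only [Finset.sum_add_distrib, Finset.sum_const, nsmul_eq_mul]
    ring
  have h0mem : (0:ℝ) ∈ Set.Icc (-1:ℝ) 1 := by norm_num
  have h1mem : (1:ℝ) ∈ Set.Icc (-1:ℝ) 1 := by norm_num
  have hm1mem : (-1:ℝ) ∈ Set.Icc (-1:ℝ) 1 := by norm_num
  refine ⟨fun u hu => ?_, fun hlt u hu hne => ?_, fun hlt u hu hne => ?_⟩
  · rw [key u hu, key 0 h0mem]; ring
  · have hu1 : u < 1 := lt_of_le_of_ne hu.2 hne
    have hmp : ((Iminus.card : ℝ) - (Iplus.card : ℝ)) < 0 := by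
      have : (Iminus.card : ℝ) < (Iplus.card : ℝ) := by exact_mod_cast hlt
      linarith
    rw [key 1 h1mem, key u hu]
    nlinarith [mul_pos hcpos (sub_pos.mpr hu1)]
  · have hu1 : -1 < u := lt_of_le_of_ne hu.1 (Ne.symm hne)
    have hmp : (0:ℝ) < ((Iminus.card : ℝ) - (Iplus.card : ℝ)) := by
      have : (Iplus.card : ℝ) < (Iminus.card : ℝ) := by exact_mod_cast hlt
      linarith
    rw [key (-1) hm1mem, key u hu]
    nlinarith [mul_pos hcpos (sub_pos.mpr (show (0:ℝ) < u - (-1) by linarith))]
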